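/- Let X be a proper submodule of M. The following are equivalent: (1) X is a φ-prime submodule of M; (2) for every ideal I of R with I ⊄ (X:_R M), (X:_M I) = X ∪ (φ(X):_M I); (3) for every ideal I of R with I ⊄ (X:_R M), (X:_M I) = X or (X:_M I) = (φ(X):_M I). -/
import Mathlib


open MulOpposite Submodule

variable {R : Type*} [Ring R] {M : Type*} [AddCommGroup M] [Module Rᵐᵒᵖ M]

/-- The product `Y·A` of a set of elements of a right `R`-module `M` and a set of ring
elements: the submodule of all finite sums `Σ yᵢ·aᵢ` with `yᵢ ∈ Y`, `aᵢ ∈ A`. -/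
def sProd (Y : Set M) (A : Set R) : Submodule Rᵐᵒᵖ M :=
  Submodule.span Rᵐᵒᵖ {z | ∃ y ∈ Y, ∃ a ∈ A, z = op a • y}

/-- `(X :_R N) = {r : R | N·r ⊆ X}`. -/
def colR (X : Set M) (N : Set M) : Set R := {r | ∀ m ∈ N, op r • m ∈ X}

/-- `(X :_M A) = {m : M | m·A ⊆ X}`. -/
def colM (X : Set M) (A : Set R) : Set M := {m | ∀ r ∈ A, op r • m ∈ X}

/-- A function `φ : S(M) → S(M) ∪ {∅}` (values are either `∅` or submodules) with
`φ(X) ⊆ X` for every submodule `X`. -/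
def GoodPhi (φ : Submodule Rᵐᵒᵖ M → Set M) : Prop :=
  ∀ N : Submodule Rᵐᵒᵖ M, φ N ⊆ N ∧
    (φ N = (∅ : Set M) ∨ ∃ P : Submodule Rᵐᵒᵖ M, φ N = (P : Set M))

/-- `X` is a φ-prime submodule of the right `R`-module `M`. -/
def PhiPrime (φ : Submodule Rᵐᵒᵖ M → Set M) (X : Submodule Rᵐᵒᵖ M) : Prop :=
  X ≠ ⊤ ∧ ∀ (Y : Submodule Rᵐᵒᵖ M) (I : TwoSidedIdeal R),
    (sProd (Y : Set M) (I : Set R) : Set M) ⊆ (X : Set M) →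
    ¬((sProd (Y : Set M) (I : Set R) : Set M) ⊆ φ X) →
    (Y : Set M) ⊆ (X : Set M) ∨ (I : Set R) ⊆ colR (X : Set M) Set.univ

/-- `X` is a prime submodule of the right `R`-module `M`. -/
def PrimeSub (X : Submodule Rᵐᵒᵖ M) : Prop :=
  X ≠ ⊤ ∧ ∀ (Y : Submodule Rᵐᵒᵖ M) (I : TwoSidedIdeal R),
    (sProd (Y : Set M) (I : Set R) : Set M) ⊆ (X : Set M) →
    (Y : Set M) ⊆ (X : Set M) ∨ (I : Set R) ⊆ colR (X : Set M) Set.univ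

/-- `X` is a weakly prime submodule of the right `R`-module `M`. -/
def WeaklyPrime (X : Submodule Rᵐᵒᵖ M) : Prop :=
  X ≠ ⊤ ∧ ∀ (Y : Submodule Rᵐᵒᵖ M) (I : TwoSidedIdeal R),
    sProd (Y : Set M) (I : Set R) ≠ ⊥ →
    (sProd (Y : Set M) (I : Set R) : Set M) ⊆ (X : Set M) →
    (Y : Set M) ⊆ (X : Set M) ∨ (I : Set R) ⊆ colR (X : Set M) Set.univ

/-- `X` is an almost prime submodule of the right `R`-module `M`. -/
def AlmostPrime (X : Submodule Rᵐᵒᵖ M) : Prop :=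
  X ≠ ⊤ ∧ ∀ (Y : Submodule Rᵐᵒᵖ M) (I : TwoSidedIdeal R),
    (sProd (Y : Set M) (I : Set R) : Set M) ⊆ (X : Set M) →
    ¬((sProd (Y : Set M) (I : Set R) : Set M) ⊆
        (sProd (X : Set M) ((colR (X : Set M) Set.univ : Set R)) : Set M)) →
    (Y : Set M) ⊆ (X : Set M) ∨ (I : Set R) ⊆ colR (X : Set M) Set.univ

/-- `powAct X n = X (X :_R M)ⁿ`. -/
def powAct (X : Submodule Rᵐᵒᵖ M) : ℕ → Submodule Rᵐᵒᵖ M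
  | 0 => X
  | n + 1 => sProd (powAct X n : Set M) ((colR (X : Set M) Set.univ : Set R))

/-- The product of two sets of ring elements: all finite sums `Σ aᵢbᵢ`, `aᵢ ∈ A`, `bᵢ ∈ B`. -/
def idMul (A B : Set R) : Set R :=
  (AddSubmonoid.closure {x | ∃ a ∈ A, ∃ b ∈ B, x = a * b} : AddSubmonoid R)

/-- A prime (two-sided) ideal of a possibly noncommutative ring. -/
def TIPrime (P : TwoSidedIdeal R) : Prop :=
  (P : Set R) ≠ Set.univ ∧ ∀ I J : TwoSidedIdeal R,
    idMul (I : Set R) (J : Set R) ⊆ (P : Set R) →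
    (I : Set R) ⊆ (P : Set R) ∨ (J : Set R) ⊆ (P : Set R)

/-- The radical `√A`: the intersection of all prime two-sided ideals containing `A`. -/
def radSet (A : Set R) : Set R :=
  {x | ∀ P : TwoSidedIdeal R, TIPrime P → A ⊆ (P : Set R) → x ∈ (P : Set R)}

/-- A ψ-prime two-sided ideal of a possibly noncommutative ring. -/
def PsiPrime (ψ : TwoSidedIdeal R → Set R) (A : TwoSidedIdeal R) : Prop :=
  (A : Set R) ≠ Set.univ ∧ ∀ I J : TwoSidedIdeal R,
    idMul (I : Set R) (J : Set R) ⊆ (A : Set R) →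
    ¬(idMul (I : Set R) (J : Set R) ⊆ ψ A) →
    (I : Set R) ⊆ (A : Set R) ∨ (J : Set R) ⊆ (A : Set R)

/-- The induced function `φ_Y` on submodules of `M/Y`: `φ_Y(X/Y) = (φ(X)+Y)/Y`. -/
def phiQuot (φ : Submodule Rᵐᵒᵖ M → Set M) (Y : Submodule Rᵐᵒᵖ M) :
    Submodule Rᵐᵒᵖ (M ⧸ Y) → Set (M ⧸ Y) :=
  fun Q => Y.mkQ '' (φ (Q.comap Y.mkQ))

/-- The colon `(X :_R Y)` of two submodules, as a two-sided ideal of `R`. -/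
def colTI (X Y : Submodule Rᵐᵒᵖ M) : TwoSidedIdeal R :=
  TwoSidedIdeal.mk' (colR (X : Set M) (Y : Set M))
    (by intro m hm; simp)
    (by intro x y hx hy m hm
        rw [op_add, add_smul]
        exact X.add_mem (hx m hm) (hy m hm))
    (by intro x hx m hm
        rw [op_neg, neg_smul]
        exact X.neg_mem (hx m hm))
    (by intro x y hy m hm
        rw [op_mul, mul_smul]
        exact hy _ (Y.smul_mem (op x) hm))
    (by intro x y hx m hm
        rw [op_mul, mul_smul]
        exact X.smul_mem (op y) (hx m hm))

/-- The colon `(X :_M I)` as a submodule of `M`, for a two-sided ideal `I`. -/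
def colMS (X : Submodule Rᵐᵒᵖ M) (I : TwoSidedIdeal R) : Submodule Rᵐᵒᵖ M where
  carrier := colM (X : Set M) (I : Set R)
  add_mem' := by
    intro a b ha hb r hr
    rw [smul_add]
    exact X.add_mem (ha r hr) (hb r hr)
  zero_mem' := by
    intro r hr
    rw [smul_zero]
    exact X.zero_mem
  smul_mem' := by
    intro c m hm r hr
    rw [← mul_smul, show op r * c = op (unop c * r) from by rw [op_mul, op_unop]]
    exact hm _ (I.mul_mem_left _ _ hr)

/-- `M` is a multiplication right `R`-module: every submodule `X` equals `M(X :_R M)`. -/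
def IsMultiplication (R : Type*) [Ring R] (M : Type*) [AddCommGroup M]
    [Module Rᵐᵒᵖ M] : Prop :=
  ∀ X : Submodule Rᵐᵒᵖ M, X = sProd (Set.univ : Set M) ((colR (X : Set M) Set.univ : Set R))

/-- The product `XY = M(X :_R M)(Y :_R M)` of two submodules of a multiplication module. -/
def mprod (X Y : Submodule Rᵐᵒᵖ M) : Submodule Rᵐᵒᵖ M :=
  sProd ((sProd (Set.univ : Set M) ((colR (X : Set M) Set.univ : Set R)) : Submodule Rᵐᵒᵖ M) : Set M)
    ((colR (Y : Set M) Set.univ : Set R))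

/-- A φ-m-system in a right `R`-module `M`. -/
def PhiMSystem (φ : Submodule Rᵐᵒᵖ M → Set M) (S : Set M) : Prop :=
  S.Nonempty ∧ ∀ (Y₁ Y₂ : Submodule Rᵐᵒᵖ M) (I : TwoSidedIdeal R),
    ((Y₁ ⊔ Y₂ : Submodule Rᵐᵒᵖ M) : Set M) ∩ S ≠ ∅ →
    ((Y₁ ⊔ sProd (Set.univ : Set M) (I : Set R) : Submodule Rᵐᵒᵖ M) : Set M) ∩ S ≠ ∅ →
    ¬((sProd (Y₂ : Set M) (I : Set R) : Set M) ⊆ φ (Submodule.span Rᵐᵒᵖ Sᶜ)) →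
    ((Y₁ ⊔ sProd (Y₂ : Set M) (I : Set R) : Submodule Rᵐᵒᵖ M) : Set M) ∩ S ≠ ∅

lemma mem_sProd' {Y : Set M} {A : Set R} {y : M} {a : R} (hy : y ∈ Y) (ha : a ∈ A) :
    op a • y ∈ sProd Y A :=
  Submodule.subset_span ⟨y, hy, a, ha, rfl⟩

lemma sProd_subset' {Y : Set M} {A : Set R} {X : Submodule Rᵐᵒᵖ M}
    (h : ∀ y ∈ Y, ∀ a ∈ A, op a • y ∈ X) : (sProd Y A : Set M) ⊆ (X : Set M) := by
  intro z hz
  refine Submodule.span_le.mpr ?_ hz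
  rintro z ⟨y, hy, a, ha, rfl⟩
  exact h y hy a ha

lemma colM_empty' {I : TwoSidedIdeal R} : colM (∅ : Set M) (I : Set R) = (∅ : Set M) := by
  ext m
  simp only [colM, Set.mem_setOf_eq, Set.mem_empty_iff_false, iff_false, not_forall]
  exact ⟨0, I.zero_mem, fun h => h⟩

/-- For a proper submodule `X` of `M`, TFAE: (1) `X` is φ-prime;
(2) for every ideal `I ⊄ (X :_R M)`, `(X :_M I) = X ∪ (φ(X) :_M I)`;
(3) for every ideal `I ⊄ (X :_R M)`, `(X :_M I) = X` or `(X :_M I) = (φ(X) :_M I)`. -/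
theorem stmt_11 (φ : Submodule Rᵐᵒᵖ M → Set M) (hφ : GoodPhi φ)
    (X : Submodule Rᵐᵒᵖ M) (hX : X ≠ ⊤) :
    [PhiPrime φ X,
     ∀ I : TwoSidedIdeal R, ¬((I : Set R) ⊆ (colR (X : Set M) Set.univ : Set R)) →
       colM (X : Set M) (I : Set R) = (X : Set M) ∪ colM (φ X) (I : Set R),
     ∀ I : TwoSidedIdeal R, ¬((I : Set R) ⊆ (colR (X : Set M) Set.univ : Set R)) →
       (colM (X : Set M) (I : Set R) = (X : Set M) ∨
        colM (X : Set M) (I : Set R) = colM (φ X) (I : Set R))].TFAE := by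
  tfae_have 1 → 2 := by
    intro h1 I hI
    ext m
    constructor
    · intro hm
      by_cases hmφ : m ∈ colM (φ X) (I : Set R)
      · exact Or.inr hmφ
      · left
        simp only [colM, Set.mem_setOf_eq, not_forall] at hmφ
        obtain ⟨r, hrI, hr⟩ := hmφ
        have hsub : (sProd ((Submodule.span Rᵐᵒᵖ {m} : Submodule Rᵐᵒᵖ M) : Set M)
            (I : Set R) : Set M) ⊆ (X : Set M) := by
          refine sProd_subset' ?_
          intro y hy a ha
          rw [SetLike.mem_coe, Submodule.mem_span_singleton] at hy
          obtain ⟨c, rfl⟩ := hy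
          rw [← mul_smul, show (op a : Rᵐᵒᵖ) * c = op (unop c * a) by
            rw [op_mul, op_unop]]
          exact hm _ (I.mul_mem_left _ _ ha)
        have hnot : ¬((sProd ((Submodule.span Rᵐᵒᵖ {m} : Submodule Rᵐᵒᵖ M) : Set M)
            (I : Set R) : Set M) ⊆ φ X) := by
          intro hcon
          exact hr (hcon (mem_sProd' (Submodule.mem_span_singleton_self m) hrI))
        rcases h1.2 _ I hsub hnot with h | h
        · exact h (Submodule.mem_span_singleton_self m)
        · exact absurd h hI
    · rintro (hm | hm)
      · intro r hr
        exact X.smul_mem (op r) hm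
      · intro r hr
        exact (hφ X).1 (hm r hr)
  tfae_have 2 → 3 := by
    intro h2 I hI
    have heq := h2 I hI
    rcases (hφ X).2 with h0 | ⟨P, hP⟩
    · left
      rw [heq, h0, colM_empty', Set.union_empty]
    · rw [hP] at heq ⊢
      by_cases hBX : colM (P : Set M) (I : Set R) ⊆ (X : Set M)
      · left
        rw [heq, Set.union_eq_self_of_subset_right hBX]
      · right
        obtain ⟨b, hbB, hbX⟩ := Set.not_subset.mp hBX
        have hPX : (P : Set M) ⊆ (X : Set M) := hP ▸ (hφ X).1
        have hbC : b ∈ colM (X : Set M) (I : Set R) := heq ▸ Or.inr hbB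
        ext c
        constructor
        · intro hc
          rcases heq ▸ hc with hcX | hcB
          · -- c ∈ X; use c + b
            have hcbC : c + b ∈ colM (X : Set M) (I : Set R) := by
              intro r hr
              rw [smul_add]
              exact X.add_mem (hc r hr) (hbC r hr)
            rcases heq ▸ hcbC with hcbX | hcbB
            · exact absurd (by simpa using X.sub_mem hcbX hcX) hbX
            · intro r hr
              have := P.sub_mem (hcbB r hr) (hbB r hr)
              rwa [← smul_sub, add_sub_cancel_right] at this
          · exact hcB
        · intro hc
          exact heq ▸ Or.inr hc
  tfae_have 3 → 1 := by
    intro h3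
    refine ⟨hX, ?_⟩
    intro Y I hYI hnφ
    by_cases hI : (I : Set R) ⊆ colR (X : Set M) Set.univ
    · exact Or.inr hI
    · left
      have hYC : (Y : Set M) ⊆ colM (X : Set M) (I : Set R) := by
        intro y hy r hr
        exact hYI (mem_sProd' hy hr)
      rcases h3 I hI with heq | heq
      · exact heq ▸ hYC
      · exfalso
        rw [heq] at hYC
        rcases (hφ X).2 with h0 | ⟨P, hP⟩
        · rw [h0, colM_empty'] at hYC
          exact hYC Y.zero_mem
        · refine hnφ ?_
          rw [hP] at hYC ⊢
          exact sProd_subset' fun y hy a ha => hYC hy a ha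
  tfae_finish
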